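/- (Upper sieve) Let l be a lace-map on the subsets of a finite set P, let X be a finite set, let A : X → (subsets of P), and let wt : X → ℝ be a nonnegative weight function. Suppose every unsaturated lace of l (i.e., every lace L with C(L) ≠ ∅) has odd cardinality. Then N₀(X) = Σ_{x ∈ X, A(x) = ∅} wt(x) satisfies N₀(X) ≤ Σ_{L saturated lace} (−1)^{|L|} N(L), where the sum is over laces L with C(L) = ∅ and N(L) = Σ_{x ∈ X, L ⊆ A(x)} wt(x) is the total weight of elements having all the properties in L. -/

import Mathlib

open Finset

/-- The set `C(L)` of properties compatible with a lace `L`. -/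
def laceC {α : Type*} [DecidableEq α] [Fintype α]
    (l : Finset α → Finset α) (L : Finset α) : Finset α :=
  (Finset.univ \ L).filter (fun p => l (insert p L) = L)

section aux

variable {α : Type*} [DecidableEq α]

lemma sum_neg_one_pow_real (S : Finset α) :
    ∑ T ∈ S.powerset, (-1:ℝ)^T.card = if S = ∅ then 1 else 0 := by
  have h := Finset.sum_powerset_neg_one_pow_card (x := S)
  have := congrArg (Int.cast : ℤ → ℝ) h
  push_cast at this
  simpa using this

lemma lace_union (l : Finset α → Finset α)
    (h3 : ∀ S₁ S₂ : Finset α, l S₁ = l S₂ → l (S₁ ∪ S₂) = l S₁)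
    (L : Finset α) (hL : l L = L) :
    ∀ T : Finset α, (∀ p ∈ T, l (insert p L) = L) → l (L ∪ T) = L := by
  intro T
  induction T using Finset.induction_on with
  | empty => simpa using hL
  | insert _ _ ha ih =>
    rename_i a T
    intro hT
    have hIH : l (L ∪ T) = L := ih (fun p hp => hT p (mem_insert_of_mem hp))
    have haL : l (insert a L) = L := hT a (mem_insert_self a T)
    have hu := h3 (L ∪ T) (insert a L) (by rw [hIH, haL])
    have heq : (L ∪ T) ∪ insert a L = L ∪ insert a T := by
      ext x; simp only [mem_union, mem_insert]; tauto
    rw [heq, hIH] at hu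
    exact hu

lemma fiber_eq (l : Finset α → Finset α)
    (h1 : ∀ S : Finset α, l S ⊆ S)
    (h2 : ∀ S G : Finset α, l S ⊆ G → G ⊆ S → l G = l S)
    (h3 : ∀ S₁ S₂ : Finset α, l S₁ = l S₂ → l (S₁ ∪ S₂) = l S₁)
    (S L : Finset α) (hL : l L = L) (hLS : L ⊆ S) :
    S.powerset.filter (fun G => l G = L)
      = ((S \ L).filter (fun p => l (insert p L) = L)).powerset.image (fun T => L ∪ T) := by
  ext G
  simp only [mem_filter, mem_powerset, mem_image]
  constructor
  · rintro ⟨hGS, hlG⟩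
    have hLG : L ⊆ G := hlG ▸ h1 G
    refine ⟨G \ L, ?_, union_sdiff_of_subset hLG⟩
    intro p hp
    rw [mem_sdiff] at hp
    rw [mem_filter, mem_sdiff]
    refine ⟨⟨hGS hp.1, hp.2⟩, ?_⟩
    have := h2 G (insert p L) (by rw [hlG]; exact subset_insert _ _)
      (insert_subset hp.1 hLG)
    rw [this, hlG]
  · rintro ⟨T, hT, rfl⟩
    constructor
    · refine union_subset hLS ?_
      intro p hp
      exact (mem_sdiff.mp (mem_filter.mp (hT hp)).1).1
    · exact lace_union l h3 L hL T (fun p hp => (mem_filter.mp (hT hp)).2)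

lemma fiber_sum (l : Finset α → Finset α)
    (h1 : ∀ S : Finset α, l S ⊆ S)
    (h2 : ∀ S G : Finset α, l S ⊆ G → G ⊆ S → l G = l S)
    (h3 : ∀ S₁ S₂ : Finset α, l S₁ = l S₂ → l (S₁ ∪ S₂) = l S₁)
    (S L : Finset α) (hL : l L = L) (hLS : L ⊆ S) :
    ∑ G ∈ S.powerset.filter (fun G => l G = L), (-1:ℝ)^G.card
      = (-1:ℝ)^L.card *
        (if (S \ L).filter (fun p => l (insert p L) = L) = ∅ then 1 else 0) := by
  set D := (S \ L).filter (fun p => l (insert p L) = L) with hD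
  have hdisj : ∀ T ⊆ D, Disjoint L T := by
    intro T hT
    refine disjoint_left.mpr fun p hpL hpT => ?_
    exact (mem_sdiff.mp (mem_filter.mp (hT hpT)).1).2 hpL
  rw [fiber_eq l h1 h2 h3 S L hL hLS, ← hD]
  rw [Finset.sum_image ?hinj]
  case hinj =>
    intro T hT T' hT' h
    have e1 : (L ∪ T) \ L = T := by
      rw [union_sdiff_left, sdiff_eq_self_of_disjoint (hdisj T (mem_powerset.mp hT)).symm]
    have e2 : (L ∪ T') \ L = T' := by
      rw [union_sdiff_left, sdiff_eq_self_of_disjoint (hdisj T' (mem_powerset.mp hT')).symm]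
    rw [← e1, ← e2, show L ∪ T = L ∪ T' from h]
  rw [← sum_neg_one_pow_real D, Finset.mul_sum]
  refine Finset.sum_congr rfl fun T hT => ?_
  rw [card_union_of_disjoint (hdisj T (mem_powerset.mp hT)), pow_add]

lemma key_ineq {α : Type*} [DecidableEq α] [Fintype α]
    (l : Finset α → Finset α)
    (h1 : ∀ S : Finset α, l S ⊆ S)
    (h2 : ∀ S G : Finset α, l S ⊆ G → G ⊆ S → l G = l S)
    (h3 : ∀ S₁ S₂ : Finset α, l S₁ = l S₂ → l (S₁ ∪ S₂) = l S₁)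
    (hodd : ∀ L : Finset α, l L = L → laceC l L ≠ ∅ → Odd L.card)
    (S : Finset α) :
    (if S = ∅ then (1:ℝ) else 0) ≤
      ∑ L ∈ S.powerset.filter (fun L => l L = L ∧ laceC l L = ∅), (-1:ℝ)^L.card := by
  have hpart : ∑ G ∈ S.powerset, (-1:ℝ)^G.card
      = ∑ L ∈ S.powerset.filter (fun L => l L = L),
          ∑ G ∈ S.powerset.filter (fun G => l G = L), (-1:ℝ)^G.card := by
    refine (Finset.sum_fiberwise_of_maps_to ?_ _).symm
    intro G hG
    rw [mem_powerset] at hG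
    rw [mem_filter, mem_powerset]
    exact ⟨(h1 G).trans hG, h2 G (l G) (subset_refl _) (h1 G)⟩
  have total : (if S = ∅ then (1:ℝ) else 0)
      = ∑ L ∈ S.powerset.filter (fun L => l L = L),
          (-1:ℝ)^L.card *
            (if (S \ L).filter (fun p => l (insert p L) = L) = ∅ then 1 else 0) := by
    rw [← sum_neg_one_pow_real S, hpart]
    refine Finset.sum_congr rfl fun L hL => ?_
    rw [mem_filter, mem_powerset] at hL
    exact fiber_sum l h1 h2 h3 S L hL.2 hL.1
  rw [← Finset.sum_filter_add_sum_filter_not (S.powerset.filter (fun L => l L = L))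
    (fun L => laceC l L = ∅)] at total
  have hDsub : ∀ L : Finset α, (S \ L).filter (fun p => l (insert p L) = L) ⊆ laceC l L := by
    intro L p hp
    rw [mem_filter, mem_sdiff] at hp
    rw [laceC, mem_filter, mem_sdiff]
    exact ⟨⟨mem_univ p, hp.1.2⟩, hp.2⟩
  have hsat : ∑ L ∈ (S.powerset.filter (fun L => l L = L)).filter (fun L => laceC l L = ∅),
        (-1:ℝ)^L.card *
          (if (S \ L).filter (fun p => l (insert p L) = L) = ∅ then 1 else 0)
      = ∑ L ∈ S.powerset.filter (fun L => l L = L ∧ laceC l L = ∅), (-1:ℝ)^L.card := by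
    rw [Finset.filter_filter]
    refine Finset.sum_congr rfl fun L hL => ?_
    rw [mem_filter] at hL
    have : (S \ L).filter (fun p => l (insert p L) = L) = ∅ :=
      subset_empty.mp (hL.2.2 ▸ hDsub L)
    rw [this]
    simp
  have hunsat : ∑ L ∈ (S.powerset.filter (fun L => l L = L)).filter
        (fun L => ¬ laceC l L = ∅),
        (-1:ℝ)^L.card *
          (if (S \ L).filter (fun p => l (insert p L) = L) = ∅ then 1 else 0) ≤ 0 := by
    refine Finset.sum_nonpos fun L hL => ?_
    rw [mem_filter, mem_filter] at hL
    have hoddL := hodd L hL.1.2 hL.2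
    rw [Odd.neg_one_pow hoddL]
    split <;> norm_num
  rw [hsat] at total
  linarith
end aux

/-- Upper sieve: if every unsaturated lace has odd cardinality and
the weights are nonnegative, then
`N₀(X) ≤ Σ_{L saturated lace} (−1)^{|L|} N(L)`. -/
theorem lace_upper_sieve {α : Type*} [DecidableEq α] [Fintype α]
    (l : Finset α → Finset α)
    (h1 : ∀ S : Finset α, l S ⊆ S)
    (h2 : ∀ S G : Finset α, l S ⊆ G → G ⊆ S → l G = l S)
    (h3 : ∀ S₁ S₂ : Finset α, l S₁ = l S₂ → l (S₁ ∪ S₂) = l S₁)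
    (X : Type*) [Fintype X] (A : X → Finset α) (wt : X → ℝ)
    (hwt : ∀ x, 0 ≤ wt x)
    (hodd : ∀ L : Finset α, l L = L → laceC l L ≠ ∅ → Odd L.card) :
    ∑ x ∈ Finset.univ.filter (fun x : X => A x = ∅), wt x ≤
      ∑ L ∈ Finset.univ.filter (fun L : Finset α => l L = L ∧ laceC l L = ∅),
        (-1 : ℝ) ^ L.card *
          ∑ x ∈ Finset.univ.filter (fun x : X => L ⊆ A x), wt x := by
  classical
  have hrhs : ∑ L ∈ Finset.univ.filter (fun L : Finset α => l L = L ∧ laceC l L = ∅),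
        (-1 : ℝ) ^ L.card * ∑ x ∈ Finset.univ.filter (fun x : X => L ⊆ A x), wt x
      = ∑ x : X, wt x *
          ∑ L ∈ (A x).powerset.filter (fun L => l L = L ∧ laceC l L = ∅), (-1:ℝ)^L.card := by
    have step1 : ∀ L : Finset α,
        (-1 : ℝ) ^ L.card * ∑ x ∈ Finset.univ.filter (fun x : X => L ⊆ A x), wt x
          = ∑ x : X, (if L ⊆ A x then (-1:ℝ)^L.card * wt x else 0) := by
      intro L
      rw [Finset.sum_filter, Finset.mul_sum]
      exact Finset.sum_congr rfl fun x _ => by split <;> ring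
    rw [Finset.sum_congr rfl fun L _ => step1 L, Finset.sum_comm]
    refine Finset.sum_congr rfl fun x _ => ?_
    rw [Finset.mul_sum]
    have hset : (A x).powerset.filter (fun L => l L = L ∧ laceC l L = ∅)
        = (Finset.univ.filter (fun L : Finset α => l L = L ∧ laceC l L = ∅)).filter
            (fun L => L ⊆ A x) := by
      ext L
      simp only [mem_filter, mem_powerset, mem_univ, true_and]
      tauto
    rw [hset, Finset.sum_filter (fun L => L ⊆ A x)]
    refine Finset.sum_congr rfl fun L _ => ?_
    split <;> ring
  rw [hrhs, Finset.sum_filter]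
  refine Finset.sum_le_sum fun x _ => ?_
  have hk := key_ineq l h1 h2 h3 hodd (A x)
  have := mul_le_mul_of_nonneg_left hk (hwt x)
  calc (if A x = ∅ then wt x else 0)
      = wt x * (if A x = ∅ then 1 else 0) := by split <;> ring
    _ ≤ _ := this
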